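/- Suppose 0 < R < d/(m+n). If x : [0,∞) → [0,1] is differentiable and satisfies x'(t) = φ_R(x(t)) for all t ≥ 0 with x(0) ∈ [0,1), then x(t) → 0 as t → ∞ (i.e., the basin of attraction of the equilibrium x = 0 contains [0,1)). -/
import Mathlib

/-- If 0 < R < d/(m+n), every trajectory of ẋ = φ_R(x) on [0,1] starting
in [0,1) converges to 0. -/
theorem stmt_12 (m n : ℕ) (hm : 0 < m) (hn : 0 < n) (d R : ℝ) (hd : 0 < d) (hR : 0 < R)
    (h : R < d / ((m : ℝ) + n))
    (x : ℝ → ℝ)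
    (hmem : ∀ t : ℝ, 0 ≤ t → x t ∈ Set.Icc (0 : ℝ) 1)
    (hode : ∀ t : ℝ, 0 ≤ t →
      HasDerivAt x
        ((x t * (1 - x t) / ((m : ℝ) + n * x t)) * (R - d / ((m : ℝ) + n * x t))) t)
    (h0 : x 0 ∈ Set.Ico (0 : ℝ) 1) :
    Filter.Tendsto x Filter.atTop (nhds 0) := by
  have hm' : (0:ℝ) < m := by exact_mod_cast hm
  have hn' : (0:ℝ) < n := by exact_mod_cast hn
  set M : ℝ := (m : ℝ) + n with hMdef
  have hMpos : 0 < M := by positivity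
  have hden : ∀ t, 0 ≤ t → 0 < (m:ℝ) + n * x t := by
    intro t ht
    nlinarith [(hmem t ht).1]
  have hdenle : ∀ t, 0 ≤ t → (m:ℝ) + n * x t ≤ M := by
    intro t ht
    nlinarith [(hmem t ht).2]
  have hqneg : ∀ t, 0 ≤ t → R - d / ((m:ℝ) + n * x t) ≤ R - d / M := by
    intro t ht
    have : d / M ≤ d / ((m:ℝ) + n * x t) :=
      div_le_div_of_nonneg_left hd.le (hden t ht) (hdenle t ht)
    linarith
  have hRM : R - d / M < 0 := by linarith
  have hp_nonneg : ∀ t, 0 ≤ t → 0 ≤ x t * (1 - x t) / ((m:ℝ) + n * x t) := by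
    intro t ht
    have h1 := (hmem t ht).1
    have h2 := (hmem t ht).2
    have : 0 ≤ x t * (1 - x t) := by nlinarith
    exact div_nonneg this (hden t ht).le
  have hφ_nonpos : ∀ t, 0 ≤ t →
      (x t * (1 - x t) / ((m:ℝ) + n * x t)) * (R - d / ((m:ℝ) + n * x t)) ≤ 0 := by
    intro t ht
    exact mul_nonpos_of_nonneg_of_nonpos (hp_nonneg t ht)
      (le_trans (hqneg t ht) hRM.le)
  have hcont : ContinuousOn x (Set.Ici (0:ℝ)) := fun t ht =>
    ((hode t ht).differentiableAt.continuousAt).continuousWithinAt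
  have hanti : AntitoneOn x (Set.Ici (0:ℝ)) := by
    apply antitoneOn_of_deriv_nonpos (convex_Ici 0) hcont
    · intro t ht
      rw [interior_Ici] at ht
      exact (hode t ht.le).differentiableAt.differentiableWithinAt
    · intro t ht
      rw [interior_Ici] at ht
      rw [(hode t ht.le).deriv]
      exact hφ_nonpos t ht.le
  -- auxiliary function defined on all of ℝ
  set y : ℝ → ℝ := fun t => x (max t 0) with hydef
  have hy_anti : Antitone y := by
    intro s t hst
    exact hanti (Set.mem_Ici.2 (le_max_right s 0)) (Set.mem_Ici.2 (le_max_right t 0))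
      (max_le_max hst le_rfl)
  have hy_nonneg : ∀ t, 0 ≤ y t := fun t => (hmem _ (le_max_right t 0)).1
  have hy_bdd : BddBelow (Set.range y) := ⟨0, by rintro _ ⟨t, rfl⟩; exact hy_nonneg t⟩
  set L : ℝ := ⨅ t, y t with hLdef
  have hy_tendsto : Filter.Tendsto y Filter.atTop (nhds L) :=
    tendsto_atTop_ciInf hy_anti hy_bdd
  have hxy : x =ᶠ[Filter.atTop] y := by
    filter_upwards [Filter.eventually_ge_atTop (0:ℝ)] with t ht
    simp [hydef, max_eq_left ht]
  have hx_tendsto : Filter.Tendsto x Filter.atTop (nhds L) :=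
    hy_tendsto.congr' hxy.symm
  have hL_nonneg : 0 ≤ L := le_ciInf hy_nonneg
  have hL_le : ∀ t, 0 ≤ t → L ≤ x t := by
    intro t ht
    have := ciInf_le hy_bdd t
    simpa [hydef, max_eq_left ht] using this
  -- show L = 0
  rcases eq_or_lt_of_le hL_nonneg with hL0 | hLpos
  · rwa [← hL0] at hx_tendsto
  exfalso
  have hx0lt : x 0 < 1 := h0.2
  set a : ℝ := L * (1 - x 0) / M with hadef
  have ha : 0 < a := by
    apply div_pos _ hMpos
    nlinarith
  set b : ℝ := d / M - R with hbdef
  have hb : 0 < b := by simp [hbdef]; linarith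
  have hx_le_x0 : ∀ t, 0 ≤ t → x t ≤ x 0 := fun t ht =>
    hanti (Set.self_mem_Ici) (Set.mem_Ici.2 ht) ht
  have hφ_le : ∀ t, 0 ≤ t →
      (x t * (1 - x t) / ((m:ℝ) + n * x t)) * (R - d / ((m:ℝ) + n * x t)) ≤ -(a * b) := by
    intro t ht
    have hp : a ≤ x t * (1 - x t) / ((m:ℝ) + n * x t) := by
      apply div_le_div₀ (by nlinarith [(hmem t ht).1, (hmem t ht).2]) _ (hden t ht) (hdenle t ht)
      have h1 := hL_le t ht
      have h2 := hx_le_x0 t ht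
      nlinarith
    have hq : R - d / ((m:ℝ) + n * x t) ≤ -b := by
      have := hqneg t ht; simp [hbdef]; linarith
    calc (x t * (1 - x t) / ((m:ℝ) + n * x t)) * (R - d / ((m:ℝ) + n * x t))
        ≤ a * (R - d / ((m:ℝ) + n * x t)) := by
          apply mul_le_mul_of_nonpos_right hp (le_trans (hqneg t ht) hRM.le)
      _ ≤ a * (-b) := mul_le_mul_of_nonneg_left hq ha.le
      _ = -(a * b) := by ring
  have habpos : 0 < a * b := mul_pos ha hb
  have hg_anti : AntitoneOn (fun t => x t + a * b * t) (Set.Ici (0:ℝ)) := by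
    apply antitoneOn_of_deriv_nonpos (convex_Ici 0)
    · exact hcont.add ((continuous_const.mul continuous_id).continuousOn)
    · intro t ht
      rw [interior_Ici] at ht
      exact ((hode t ht.le).add ((hasDerivAt_id t).const_mul (a*b))).differentiableAt.differentiableWithinAt
    · intro t ht
      rw [interior_Ici] at ht
      have hder : HasDerivAt (fun t => x t + a * b * t)
          ((x t * (1 - x t) / ((m:ℝ) + n * x t)) * (R - d / ((m:ℝ) + n * x t)) + a * b * 1) t :=
        (hode t ht.le).add ((hasDerivAt_id t).const_mul (a*b))
      rw [hder.deriv]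
      have := hφ_le t ht.le
      linarith
  have ht0 : (0:ℝ) ≤ x 0 / (a*b) + 1 := by
    have := div_nonneg h0.1 habpos.le
    linarith
  have hkey := hg_anti Set.self_mem_Ici (Set.mem_Ici.2 ht0) ht0
  simp only at hkey
  have heq : a * b * (x 0 / (a*b) + 1) = x 0 + a * b := by
    field_simp
  have hxtnn := (hmem _ ht0).1
  -- hkey : x t0 + a*b*t0 ≤ x 0 + a*b*0
  have : a * b ≤ 0 := by nlinarith [hkey]
  linarith
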